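/- arXiv:2111.12692 — 4 statements merged into one kernel-verified Lean document; each statement's English description precedes it below -/
import Mathlib

section
/- Let 1<p<∞, let v,w be weights on ℝⁿ with [v,w]_{A_p}<∞, and suppose σ := w^{1-p'} satisfies [σ]_{A_∞}<∞. Let c_n be the dimensional constant in the sharp reverse Hölder inequality, and let 1<r<∞ be defined by r' = c_n p' [σ]_{A_∞}. Then [v,w]_{A_{p/r}} ≤ 2^{p-1} [v,w]_{A_p}. -/
open MeasureTheory ENNReal NNReal Set

noncomputable section

/-- The conjugate exponent `p' = p/(p-1)`. -/
def conjExp (p : ℝ) : ℝ := p / (p - 1)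
/-- An (open) axis-parallel cube in `ℝⁿ`. -/
def IsCube (n : ℕ) (Q : Set (Fin n → ℝ)) : Prop :=
  ∃ (a : Fin n → ℝ) (r : ℝ), 0 < r ∧ Q = Set.univ.pi fun i => Set.Ioo (a i) (a i + r)

/-- An (open) axis-parallel rectangle in `ℝⁿ`. -/
def IsRect (n : ℕ) (R : Set (Fin n → ℝ)) : Prop :=
  ∃ a b : Fin n → ℝ, (∀ i, a i < b i) ∧ R = Set.univ.pi fun i => Set.Ioo (a i) (b i)

/-- The average `⨍_Q f` of a nonnegative function over a set. -/
def setAvg {n : ℕ} (Q : Set (Fin n → ℝ)) (f : (Fin n → ℝ) → ℝ≥0∞) : ℝ≥0∞ :=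
  (∫⁻ x in Q, f x) / volume Q

/-- The Hardy–Littlewood maximal operator (over axis-parallel cubes). -/
def maximal {n : ℕ} (f : (Fin n → ℝ) → ℝ≥0∞) (x : Fin n → ℝ) : ℝ≥0∞ :=
  ⨆ (Q : Set (Fin n → ℝ)) (_ : IsCube n Q) (_ : x ∈ Q), setAvg Q f

/-- The strong maximal operator (over axis-parallel rectangles). -/
def maximalR {n : ℕ} (f : (Fin n → ℝ) → ℝ≥0∞) (x : Fin n → ℝ) : ℝ≥0∞ :=
  ⨆ (R : Set (Fin n → ℝ)) (_ : IsRect n R) (_ : x ∈ R), setAvg R f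

/-- The dual weight `σ = w^{1-p'}`. -/
def dualWeight {n : ℕ} (p : ℝ) (w : (Fin n → ℝ) → ℝ≥0∞) : (Fin n → ℝ) → ℝ≥0∞ :=
  fun x => w x ^ (1 - conjExp p)

/-- The two-weight Muckenhoupt constant `[v,w]_{A_p}`. -/
def twoApConst (n : ℕ) (p : ℝ) (v w : (Fin n → ℝ) → ℝ≥0∞) : ℝ≥0∞ :=
  ⨆ (Q : Set (Fin n → ℝ)) (_ : IsCube n Q),
    setAvg Q v * setAvg Q (dualWeight p w) ^ (p - 1)

/-- The Muckenhoupt constant `[w]_{A_p}`. -/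
def ApConst (n : ℕ) (p : ℝ) (w : (Fin n → ℝ) → ℝ≥0∞) : ℝ≥0∞ := twoApConst n p w w

/-- The Fujii–Wilson constant `[w]_{A_∞}`. -/
def AinfConst (n : ℕ) (w : (Fin n → ℝ) → ℝ≥0∞) : ℝ≥0∞ :=
  ⨆ (Q : Set (Fin n → ℝ)) (_ : IsCube n Q),
    (∫⁻ x in Q, maximal (Q.indicator w) x) / ∫⁻ x in Q, w x

/-- The strong Muckenhoupt constant `[w]_{A_{p,ℛ}}`. -/
def ApRConst (n : ℕ) (p : ℝ) (w : (Fin n → ℝ) → ℝ≥0∞) : ℝ≥0∞ :=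
  ⨆ (R : Set (Fin n → ℝ)) (_ : IsRect n R),
    setAvg R w * setAvg R (dualWeight p w) ^ (p - 1)

/-- The strong Fujii–Wilson constant `[w]_{A_{∞,ℛ}}`. -/
def AinfRConst (n : ℕ) (w : (Fin n → ℝ) → ℝ≥0∞) : ℝ≥0∞ :=
  ⨆ (R : Set (Fin n → ℝ)) (_ : IsRect n R),
    (∫⁻ x in R, maximalR (R.indicator w) x) / ∫⁻ x in R, w x
/-- Openness of the two-weight `A_p` condition: if `r' = c_n p' [σ]_{A_∞}` (with `c_n` the
constant of the sharp reverse Hölder inequality), then `[v,w]_{A_{p/r}} ≤ 2^{p-1}[v,w]_{A_p}`. -/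
theorem twoweight_Ap_openness (n : ℕ) (c : ℝ) (hc : 1 ≤ c)
    (hRHI : ∀ u : (Fin n → ℝ) → ℝ≥0∞, Measurable u → AinfConst n u ≠ ∞ →
      ∀ ru : ℝ, 1 < ru →
        ENNReal.ofReal (ru / (ru - 1)) = ENNReal.ofReal c * AinfConst n u →
          ∀ Q : Set (Fin n → ℝ), IsCube n Q →
            (setAvg Q fun x => u x ^ ru) ^ (1 / ru) ≤ 2 * setAvg Q u)
    (p : ℝ) (hp : 1 < p)
    (v w : (Fin n → ℝ) → ℝ≥0∞) (hv : Measurable v) (hw : Measurable w)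
    (hvw : twoApConst n p v w ≠ ∞)
    (hσ : AinfConst n (dualWeight p w) ≠ ∞)
    (r : ℝ) (hr1 : 1 < r) (hrp : r < p)
    (hrdef : ENNReal.ofReal (r / (r - 1)) =
      ENNReal.ofReal c * ENNReal.ofReal (conjExp p) * AinfConst n (dualWeight p w)) :
    twoApConst n (p / r) v w ≤ (2 : ℝ≥0∞) ^ (p - 1) * twoApConst n p v w := by

  set σ := dualWeight p w with hσdef
  have hp1 : (0:ℝ) < p - 1 := by linarith
  have hr1' : (0:ℝ) < r - 1 := by linarith
  have hpr : (0:ℝ) < p - r := by linarith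
  have hp0 : (0:ℝ) < p := by linarith
  have hr0 : (0:ℝ) < r := by linarith
  set ru : ℝ := r * (p - 1) / (p - r) with hrudef
  have hru1 : 1 < ru := by
    rw [hrudef, lt_div_iff₀ hpr]; nlinarith
  have hru0 : (0:ℝ) < ru := by linarith
  have hσmeas : Measurable σ := hw.pow_const _
  have hsub : r * (p - 1) / (p - r) - 1 = p * (r - 1) / (p - r) := by
    field_simp
    ring
  have hq : ru / (ru - 1) = r * (p - 1) / (p * (r - 1)) := by
    rw [hrudef, hsub]
    rw [div_div_div_cancel_right₀]
    exact hpr.ne'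
  have hexp : ru * (p / r - 1) = p - 1 := by
    rw [hrudef]
    field_simp
  -- the conjugate-exponent identity needed to apply the RHI hypothesis
  have hruconj : ENNReal.ofReal (ru / (ru - 1)) = ENNReal.ofReal c * AinfConst n σ := by
    have hkey : (ru / (ru - 1)) * conjExp p = r / (r - 1) := by
      rw [hq, conjExp]
      field_simp
    have hmul : ENNReal.ofReal (ru / (ru - 1)) * ENNReal.ofReal (conjExp p)
        = (ENNReal.ofReal c * AinfConst n σ) * ENNReal.ofReal (conjExp p) := by
      rw [← ENNReal.ofReal_mul (by rw [hq]; positivity), hkey, hrdef]; ring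
    have hne : ENNReal.ofReal (conjExp p) ≠ 0 := by
      simp only [ne_eq, ENNReal.ofReal_eq_zero, not_le, conjExp]
      exact div_pos hp0 hp1
    exact (ENNReal.mul_left_inj hne ENNReal.ofReal_ne_top).mp hmul
  have hRHIσ := hRHI σ hσmeas hσ ru hru1 hruconj
  -- pointwise identity : the dual weight for p/r is σ^ru
  have hpoint : dualWeight (p / r) w = fun x => σ x ^ ru := by
    funext x
    rw [hσdef, dualWeight, dualWeight, ← ENNReal.rpow_mul]
    congr 1
    have hcq : conjExp (p / r) = p / (p - r) := by
      rw [conjExp]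
      rw [show p / r - 1 = (p - r) / r by field_simp, div_div_div_cancel_right₀]
      exact hr0.ne'
    rw [hcq, conjExp, hrudef]
    field_simp
    ring
  refine iSup₂_le fun Q hQ => ?_
  have hRHIQ := hRHIσ Q hQ
  -- raise the RHI to the power ru
  have h1 : setAvg Q (fun x => σ x ^ ru) ≤ (2 * setAvg Q σ) ^ ru := by
    have := ENNReal.rpow_le_rpow hRHIQ hru0.le
    rwa [← ENNReal.rpow_mul, one_div, inv_mul_cancel₀ hru0.ne', ENNReal.rpow_one] at this
  have hq1 : (0:ℝ) ≤ p / r - 1 := by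
    rw [sub_nonneg, le_div_iff₀ hr0]; linarith
  have h2 : setAvg Q (dualWeight (p / r) w) ^ (p / r - 1)
      ≤ (2 : ℝ≥0∞) ^ (p - 1) * setAvg Q σ ^ (p - 1) := by
    rw [hpoint]
    calc setAvg Q (fun x => σ x ^ ru) ^ (p / r - 1)
        ≤ ((2 * setAvg Q σ) ^ ru) ^ (p / r - 1) := ENNReal.rpow_le_rpow h1 hq1
      _ = (2 * setAvg Q σ) ^ (p - 1) := by rw [← ENNReal.rpow_mul, hexp]
      _ = (2 : ℝ≥0∞) ^ (p - 1) * setAvg Q σ ^ (p - 1) := by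
          rw [ENNReal.mul_rpow_of_nonneg _ _ (by linarith)]
  calc setAvg Q v * setAvg Q (dualWeight (p / r) w) ^ (p / r - 1)
      ≤ setAvg Q v * ((2 : ℝ≥0∞) ^ (p - 1) * setAvg Q σ ^ (p - 1)) :=
        mul_le_mul_right h2 _
    _ = (2 : ℝ≥0∞) ^ (p - 1) * (setAvg Q v * setAvg Q σ ^ (p - 1)) := by ring
    _ ≤ (2 : ℝ≥0∞) ^ (p - 1) * twoApConst n p v w := by
        gcongr
        exact le_iSup₂ (f := fun (Q : Set (Fin n → ℝ)) (_ : IsCube n Q) =>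
          setAvg Q v * setAvg Q (dualWeight p w) ^ (p - 1)) Q hQ
end
end

section
/- Let θ ∈ (0,1], t ∈ (0,∞), let φ : (0,∞) → [0,∞) be increasing and ψ : (0,∞) → [0,∞) be decreasing. Then (∫_t^∞ φ(s)ψ(s) ds/s)^θ ≤ (log 2)^{-(1-θ)} ∫_{t/2}^∞ φ(4s)^θ ψ(s)^θ ds/s. -/
open MeasureTheory ENNReal NNReal Set

noncomputable section

private lemma finset_rpow_le {θ : ℝ} (hθ0 : 0 < θ) (hθ1 : θ ≤ 1) (s : Finset ℕ)
    (a : ℕ → ℝ≥0∞) : (∑ i ∈ s, a i) ^ θ ≤ ∑ i ∈ s, a i ^ θ := by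
  induction s using Finset.cons_induction with
  | empty => simp [ENNReal.zero_rpow_of_pos hθ0]
  | cons i s hi ih =>
    rw [Finset.sum_cons, Finset.sum_cons]
    exact (ENNReal.rpow_add_le_add_rpow _ _ hθ0.le hθ1).trans (add_le_add le_rfl ih)

private lemma tsum_rpow_le {θ : ℝ} (hθ0 : 0 < θ) (hθ1 : θ ≤ 1) (a : ℕ → ℝ≥0∞) :
    (∑' n, a n) ^ θ ≤ ∑' n, a n ^ θ := by
  have h2 : ∑' n, a n ≤ (∑' n, a n ^ θ) ^ θ⁻¹ := by
    rw [ENNReal.tsum_eq_iSup_sum]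
    refine iSup_le fun s => ?_
    calc ∑ i ∈ s, a i = ((∑ i ∈ s, a i) ^ θ) ^ θ⁻¹ := by
          rw [ENNReal.rpow_rpow_inv hθ0.ne']
      _ ≤ (∑ i ∈ s, a i ^ θ) ^ θ⁻¹ :=
          ENNReal.rpow_le_rpow (finset_rpow_le hθ0 hθ1 s a) (by positivity)
      _ ≤ (∑' n, a n ^ θ) ^ θ⁻¹ :=
          ENNReal.rpow_le_rpow (ENNReal.sum_le_tsum _) (by positivity)
  calc (∑' n, a n) ^ θ ≤ ((∑' n, a n ^ θ) ^ θ⁻¹) ^ θ := ENNReal.rpow_le_rpow h2 hθ0.le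
    _ = ∑' n, a n ^ θ := ENNReal.rpow_inv_rpow hθ0.ne' _

private lemma lintegral_inv_Ioc {a : ℝ} (ha : 0 < a) :
    ∫⁻ s in Ioc a (2 * a), (ENNReal.ofReal s)⁻¹ = ENNReal.ofReal (Real.log 2) := by
  have h2a : a < 2 * a := by linarith
  have hcongr : ∫⁻ s in Ioc a (2 * a), (ENNReal.ofReal s)⁻¹
      = ∫⁻ s in Ioc a (2 * a), ENNReal.ofReal s⁻¹ := by
    refine setLIntegral_congr_fun measurableSet_Ioc (fun s hs => ?_)
    exact (ENNReal.ofReal_inv_of_pos (ha.trans hs.1)).symm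
  have hint : IntegrableOn (fun s : ℝ => s⁻¹) (Ioc a (2 * a)) := by
    have h := intervalIntegral.intervalIntegrable_inv (f := fun x : ℝ => x) (μ := volume) (a := a) (b := 2 * a)
      (fun x hx => by
        simp only [Set.uIcc_of_le h2a.le, Set.mem_Icc] at hx
        show x ≠ 0
        intro h0; rw [h0] at hx; linarith
        ) continuousOn_id
    exact (intervalIntegrable_iff_integrableOn_Ioc_of_le h2a.le).mp h
  have hnn : 0 ≤ᵐ[volume.restrict (Ioc a (2 * a))] fun s : ℝ => s⁻¹ := by
    filter_upwards [ae_restrict_mem measurableSet_Ioc] with s hs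
    exact inv_nonneg.mpr (ha.trans hs.1).le
  rw [hcongr, ← ofReal_integral_eq_lintegral_ofReal hint hnn]
  congr 1
  rw [← intervalIntegral.integral_of_le h2a.le, integral_inv]
  · rw [mul_div_assoc, div_self ha.ne', mul_one]
  · intro hx
    simp only [Set.uIcc_of_le h2a.le, Set.mem_Icc] at hx
    linarith [hx.1]

private lemma iUnion_Ioc_two_pow {c : ℝ} (hc : 0 < c) :
    (⋃ n : ℕ, Ioc ((2:ℝ) ^ n * c) (2 ^ (n + 1) * c)) = Ioi c := by
  ext s
  simp only [mem_iUnion, mem_Ioc, mem_Ioi]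
  constructor
  · rintro ⟨n, h1, _⟩
    have : (1:ℝ) ≤ 2 ^ n := one_le_pow₀ (by norm_num)
    nlinarith
  · intro hs
    have hex : ∃ n : ℕ, s ≤ 2 ^ n * c := by
      obtain ⟨n, hn⟩ := pow_unbounded_of_one_lt (s / c) (by norm_num : (1:ℝ) < 2)
      exact ⟨n, by rw [div_lt_iff₀ hc] at hn; nlinarith⟩
    classical
    let k := Nat.find hex
    have hk : s ≤ 2 ^ k * c := Nat.find_spec hex
    have hk0 : k ≠ 0 := by
      intro h
      have := hk
      rw [h] at this
      simp at this
      linarith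
    refine ⟨k - 1, ?_, ?_⟩
    · have := Nat.find_min hex (m := k - 1) (Nat.pred_lt hk0)
      push_neg at this
      exact this
    · rwa [Nat.sub_add_cancel (Nat.one_le_iff_ne_zero.mpr hk0)]

private lemma pairwise_disjoint_Ioc_two_pow {c : ℝ} (hc : 0 < c) :
    Pairwise (Function.onFun Disjoint fun n : ℕ => Ioc ((2:ℝ) ^ n * c) (2 ^ (n + 1) * c)) := by
  have key : ∀ m n : ℕ, m < n →
      Disjoint (Ioc ((2:ℝ) ^ m * c) (2 ^ (m + 1) * c)) (Ioc ((2:ℝ) ^ n * c) (2 ^ (n + 1) * c)) := by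
    intro m n hmn
    rw [Set.Ioc_disjoint_Ioc]
    have h1 : (2:ℝ) ^ (m + 1) * c ≤ 2 ^ n * c := by
      have : (2:ℝ) ^ (m+1) ≤ 2 ^ n := pow_le_pow_right₀ (by norm_num) hmn
      nlinarith
    calc min ((2:ℝ) ^ (m + 1) * c) (2 ^ (n + 1) * c) ≤ 2 ^ (m+1) * c := min_le_left _ _
      _ ≤ 2 ^ n * c := h1
      _ ≤ max ((2:ℝ) ^ m * c) (2 ^ n * c) := le_max_right _ _
  intro m n hmn
  rcases hmn.lt_or_gt with h | h
  · exact key m n h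
  · exact (key n m h).symm

/-- The elementary lemma: for `θ ∈ (0,1]`, `t > 0`, `φ` increasing and `ψ` decreasing on
`(0,∞)`, `(∫_t^∞ φψ ds/s)^θ ≤ (log 2)^{-(1-θ)} ∫_{t/2}^∞ φ(4s)^θ ψ(s)^θ ds/s`. -/
theorem monotone_integral_theta (θ t : ℝ) (hθ0 : 0 < θ) (hθ1 : θ ≤ 1) (ht : 0 < t)
    (φ ψ : ℝ → ℝ)
    (hφ0 : ∀ s, 0 < s → 0 ≤ φ s) (hψ0 : ∀ s, 0 < s → 0 ≤ ψ s)
    (hφ : MonotoneOn φ (Set.Ioi 0)) (hψ : AntitoneOn ψ (Set.Ioi 0)) :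
    (∫⁻ s in Set.Ioi t,
        ENNReal.ofReal (φ s) * ENNReal.ofReal (ψ s) / ENNReal.ofReal s) ^ θ ≤
      ENNReal.ofReal (Real.log 2 ^ (-(1 - θ))) *
        ∫⁻ s in Set.Ioi (t / 2),
          ENNReal.ofReal (φ (4 * s)) ^ θ * ENNReal.ofReal (ψ s) ^ θ / ENNReal.ofReal s := by
  have h2 : (0:ℝ) < Real.log 2 := Real.log_pos (by norm_num)
  have ht2 : (0:ℝ) < t / 2 := by linarith
  have hpow : ∀ n : ℕ, (0:ℝ) < 2 ^ n := fun n => pow_pos (by norm_num) n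
  set F : ℝ → ℝ≥0∞ := fun s => ENNReal.ofReal (φ s) * ENNReal.ofReal (ψ s) / ENNReal.ofReal s
    with hF
  set G : ℝ → ℝ≥0∞ := fun s =>
    ENNReal.ofReal (φ (4 * s)) ^ θ * ENNReal.ofReal (ψ s) ^ θ / ENNReal.ofReal s with hG
  set b : ℕ → ℝ≥0∞ := fun n =>
    ENNReal.ofReal (φ (2 ^ (n + 1) * t)) ^ θ * ENNReal.ofReal (ψ (2 ^ n * t)) ^ θ with hb
  have hLHS : ∫⁻ s in Ioi t, F s
      = ∑' n : ℕ, ∫⁻ s in Ioc ((2:ℝ) ^ n * t) (2 ^ (n + 1) * t), F s := by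
    rw [← iUnion_Ioc_two_pow ht,
      lintegral_iUnion (fun _ => measurableSet_Ioc) (pairwise_disjoint_Ioc_two_pow ht)]
  have hRHS : ∫⁻ s in Ioi (t / 2), G s
      = ∑' n : ℕ, ∫⁻ s in Ioc ((2:ℝ) ^ n * (t / 2)) (2 ^ (n + 1) * (t / 2)), G s := by
    rw [← iUnion_Ioc_two_pow ht2,
      lintegral_iUnion (fun _ => measurableSet_Ioc) (pairwise_disjoint_Ioc_two_pow ht2)]
  have hIn : ∀ n : ℕ, ∫⁻ s in Ioc ((2:ℝ) ^ n * t) (2 ^ (n + 1) * t), F s ≤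
      ENNReal.ofReal (φ (2 ^ (n + 1) * t)) * ENNReal.ofReal (ψ (2 ^ n * t)) *
        ENNReal.ofReal (Real.log 2) := by
    intro n
    have hapos : 0 < (2:ℝ) ^ n * t := mul_pos (hpow n) ht
    have h2a : (2:ℝ) ^ (n + 1) * t = 2 * (2 ^ n * t) := by ring
    rw [h2a]
    calc ∫⁻ s in Ioc ((2:ℝ) ^ n * t) (2 * (2 ^ n * t)), F s
        ≤ ∫⁻ s in Ioc ((2:ℝ) ^ n * t) (2 * (2 ^ n * t)),
            (ENNReal.ofReal (φ (2 * (2 ^ n * t))) * ENNReal.ofReal (ψ (2 ^ n * t))) *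
              (ENNReal.ofReal s)⁻¹ := by
          refine setLIntegral_mono' measurableSet_Ioc fun s hs => ?_
          have hs0 : 0 < s := hapos.trans hs.1
          have hu : φ s ≤ φ (2 * (2 ^ n * t)) :=
            hφ (mem_Ioi.mpr hs0) (mem_Ioi.mpr (by linarith)) hs.2
          have hv : ψ s ≤ ψ (2 ^ n * t) :=
            hψ (mem_Ioi.mpr hapos) (mem_Ioi.mpr hs0) hs.1.le
          simp only [hF]
          rw [div_eq_mul_inv]
          exact mul_le_mul'
            (mul_le_mul' (ENNReal.ofReal_le_ofReal hu) (ENNReal.ofReal_le_ofReal hv)) le_rfl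
      _ = (ENNReal.ofReal (φ (2 * (2 ^ n * t))) * ENNReal.ofReal (ψ (2 ^ n * t))) *
            ∫⁻ s in Ioc ((2:ℝ) ^ n * t) (2 * (2 ^ n * t)), (ENNReal.ofReal s)⁻¹ :=
          lintegral_const_mul' _ _
            (ENNReal.mul_ne_top ENNReal.ofReal_ne_top ENNReal.ofReal_ne_top)
      _ = _ := by rw [lintegral_inv_Ioc hapos]
  have hJn : ∀ n : ℕ, b n * ENNReal.ofReal (Real.log 2) ≤
      ∫⁻ s in Ioc ((2:ℝ) ^ n * (t / 2)) (2 ^ (n + 1) * (t / 2)), G s := by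
    intro n
    have hapos : 0 < (2:ℝ) ^ n * (t / 2) := mul_pos (hpow n) ht2
    have h2a : (2:ℝ) ^ (n + 1) * (t / 2) = 2 * (2 ^ n * (t / 2)) := by ring
    have hbne : b n ≠ ⊤ :=
      ENNReal.mul_ne_top (ENNReal.rpow_ne_top_of_nonneg hθ0.le ENNReal.ofReal_ne_top)
        (ENNReal.rpow_ne_top_of_nonneg hθ0.le ENNReal.ofReal_ne_top)
    rw [h2a]
    calc b n * ENNReal.ofReal (Real.log 2)
        = b n * ∫⁻ s in Ioc ((2:ℝ) ^ n * (t / 2)) (2 * (2 ^ n * (t / 2))),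
            (ENNReal.ofReal s)⁻¹ := by rw [lintegral_inv_Ioc hapos]
      _ = ∫⁻ s in Ioc ((2:ℝ) ^ n * (t / 2)) (2 * (2 ^ n * (t / 2))),
            b n * (ENNReal.ofReal s)⁻¹ := (lintegral_const_mul' _ _ hbne).symm
      _ ≤ ∫⁻ s in Ioc ((2:ℝ) ^ n * (t / 2)) (2 * (2 ^ n * (t / 2))), G s := by
          refine setLIntegral_mono' measurableSet_Ioc fun s hs => ?_
          have hs0 : 0 < s := hapos.trans hs.1
          have h4a : (2:ℝ) ^ (n + 1) * t = 4 * (2 ^ n * (t / 2)) := by ring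
          have h2at : (2:ℝ) ^ n * t = 2 * (2 ^ n * (t / 2)) := by ring
          have hu : φ (2 ^ (n + 1) * t) ≤ φ (4 * s) := by
            rw [h4a]
            exact hφ (mem_Ioi.mpr (by linarith)) (mem_Ioi.mpr (by linarith))
              (by nlinarith [hs.1])
          have hv : ψ (2 ^ n * t) ≤ ψ s := by
            rw [h2at]
            exact hψ (mem_Ioi.mpr hs0) (mem_Ioi.mpr (by linarith)) hs.2
          simp only [hG, hb]
          rw [div_eq_mul_inv]
          exact mul_le_mul'
            (mul_le_mul' (ENNReal.rpow_le_rpow (ENNReal.ofReal_le_ofReal hu) hθ0.le)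
              (ENNReal.rpow_le_rpow (ENNReal.ofReal_le_ofReal hv) hθ0.le)) le_rfl
  have hscalar : ENNReal.ofReal (Real.log 2) ^ θ
      = ENNReal.ofReal (Real.log 2 ^ (-(1 - θ))) * ENNReal.ofReal (Real.log 2) := by
    rw [← ENNReal.ofReal_mul (Real.rpow_nonneg h2.le _), ENNReal.ofReal_rpow_of_pos h2]
    congr 1
    rw [neg_sub]
    nth_rewrite 3 [← Real.rpow_one (Real.log 2)]
    rw [← Real.rpow_add h2]
    congr 1
    ring
  calc (∫⁻ s in Ioi t, F s) ^ θ
      = (∑' n : ℕ, ∫⁻ s in Ioc ((2:ℝ) ^ n * t) (2 ^ (n + 1) * t), F s) ^ θ := by rw [hLHS]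
    _ ≤ ∑' n : ℕ, (∫⁻ s in Ioc ((2:ℝ) ^ n * t) (2 ^ (n + 1) * t), F s) ^ θ :=
        tsum_rpow_le hθ0 hθ1 _
    _ ≤ ∑' n : ℕ, b n * ENNReal.ofReal (Real.log 2) ^ θ := by
        refine ENNReal.tsum_le_tsum fun n => ?_
        calc (∫⁻ s in Ioc ((2:ℝ) ^ n * t) (2 ^ (n + 1) * t), F s) ^ θ
            ≤ (ENNReal.ofReal (φ (2 ^ (n + 1) * t)) * ENNReal.ofReal (ψ (2 ^ n * t)) *
                ENNReal.ofReal (Real.log 2)) ^ θ := ENNReal.rpow_le_rpow (hIn n) hθ0.le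
          _ = b n * ENNReal.ofReal (Real.log 2) ^ θ := by
              rw [ENNReal.mul_rpow_of_nonneg _ _ hθ0.le, ENNReal.mul_rpow_of_nonneg _ _ hθ0.le,
                hb]
    _ = (∑' n : ℕ, b n) * ENNReal.ofReal (Real.log 2) ^ θ := ENNReal.tsum_mul_right
    _ = ENNReal.ofReal (Real.log 2 ^ (-(1 - θ))) * ((∑' n : ℕ, b n) * ENNReal.ofReal (Real.log 2)) := by
        rw [hscalar]; ring
    _ ≤ ENNReal.ofReal (Real.log 2 ^ (-(1 - θ))) * ∫⁻ s in Ioi (t / 2), G s := by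
        refine mul_le_mul_right ?_ _
        rw [hRHS, ← ENNReal.tsum_mul_right]
        exact ENNReal.tsum_le_tsum hJn
end
end

section
/- Let 1<p<∞ and 0<δ<1, and define the weight on ℝ by w_δ(x) = δ^{p-1} for |x| ≤ 1 and w_δ(x) = |x|^{(1-δ)(p-1)} for |x| > 1. Then [w_δ]_{A_p} ≈ δ^{-(p-1)}, i.e. there are constants 0 < c_p ≤ C_p < ∞ depending only on p such that c_p δ^{-(p-1)} ≤ [w_δ]_{A_p} ≤ C_p δ^{-(p-1)}. -/
open MeasureTheory ENNReal NNReal Set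

noncomputable section

/-- The Hardy–Littlewood maximal operator on `ℝ` (over bounded intervals). -/
def maximal1 (f : ℝ → ℝ≥0∞) (x : ℝ) : ℝ≥0∞ :=
  ⨆ (a : ℝ) (b : ℝ) (_ : a < b) (_ : x ∈ Set.Icc a b),
    (∫⁻ y in Set.Icc a b, f y) / ENNReal.ofReal (b - a)

/-- The Muckenhoupt constant `[w]_{A_p}` on `ℝ`. -/
def Ap1 (p : ℝ) (w : ℝ → ℝ≥0∞) : ℝ≥0∞ :=
  ⨆ (a : ℝ) (b : ℝ) (_ : a < b),
    ((∫⁻ x in Set.Icc a b, w x) / ENNReal.ofReal (b - a)) *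
      ((∫⁻ x in Set.Icc a b, w x ^ (1 - conjExp p)) / ENNReal.ofReal (b - a)) ^ (p - 1)

/-- The Fujii–Wilson constant `[w]_{A_∞}` on `ℝ`. -/
def Ainf1 (w : ℝ → ℝ≥0∞) : ℝ≥0∞ :=
  ⨆ (a : ℝ) (b : ℝ) (_ : a < b),
    (∫⁻ x in Set.Icc a b, maximal1 ((Set.Icc a b).indicator w) x) / ∫⁻ x in Set.Icc a b, w x

/-- The weight `w_δ(x) = δ^{p-1}` for `|x| ≤ 1`, `|x|^{(1-δ)(p-1)}` for `|x| > 1`. -/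
def wdelta (p δ : ℝ) (x : ℝ) : ℝ≥0∞ :=
  if |x| ≤ 1 then ENNReal.ofReal (δ ^ (p - 1)) else ENNReal.ofReal (|x| ^ ((1 - δ) * (p - 1)))
namespace WdAux

variable {p δ : ℝ}

lemma sub_conj (hp : 1 < p) : 1 - conjExp p = -(p - 1)⁻¹ := by
  have h : p - 1 ≠ 0 := ne_of_gt (by linarith)
  unfold conjExp
  field_simp
  ring

/-- the dual density `g = w^{-1/(p-1)}` as a real function -/
def gf (δ x : ℝ) : ℝ := if |x| ≤ 1 then δ⁻¹ else |x| ^ (δ - 1)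

lemma sigma_eq (hp : 1 < p) (hδ0 : 0 < δ) (x : ℝ) :
    wdelta p δ x ^ (1 - conjExp p) = ENNReal.ofReal (gf δ x) := by
  have h1 : (0:ℝ) < p - 1 := by linarith
  rw [sub_conj hp]
  unfold wdelta gf
  split_ifs with h
  · rw [ENNReal.ofReal_rpow_of_pos (by positivity), ← Real.rpow_mul hδ0.le]
    congr 1
    rw [mul_neg, mul_inv_cancel₀ h1.ne']
    exact Real.rpow_neg_one δ
  · have hx : (1:ℝ) < |x| := lt_of_not_ge h
    have hx0 : (0:ℝ) < |x| := by linarith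
    have he : (1 - δ) * (p - 1) * -(p - 1)⁻¹ = δ - 1 := by
      field_simp
      ring
    rw [ENNReal.ofReal_rpow_of_pos (by positivity), ← Real.rpow_mul hx0.le, he]


lemma gf_nonneg (hδ0 : 0 < δ) (x : ℝ) : 0 ≤ gf δ x := by
  unfold gf; split_ifs with h
  · positivity
  · positivity

lemma w_le (hp : 1 < p) (hδ0 : 0 < δ) (hδ1 : δ < 1) {x B : ℝ} (hB : 1 ≤ B) (hx : |x| ≤ B) :
    wdelta p δ x ≤ ENNReal.ofReal (B ^ ((1 - δ) * (p - 1))) := by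
  have h1 : (0:ℝ) < p - 1 := by linarith
  have he : 0 ≤ (1 - δ) * (p - 1) := by nlinarith
  unfold wdelta
  split_ifs with h
  · apply ENNReal.ofReal_le_ofReal
    calc δ ^ (p - 1) ≤ 1 := Real.rpow_le_one hδ0.le hδ1.le h1.le
      _ ≤ B ^ ((1 - δ) * (p - 1)) := Real.one_le_rpow hB he
  · exact ENNReal.ofReal_le_ofReal (Real.rpow_le_rpow (abs_nonneg x) hx he)

lemma gf_ge (hδ0 : 0 < δ) (hδ1 : δ < 1) {x B : ℝ} (hB : 1 ≤ B) (hx : |x| ≤ B) :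
    B ^ (δ - 1) ≤ gf δ x := by
  unfold gf
  split_ifs with h
  · calc B ^ (δ - 1) ≤ 1 := Real.rpow_le_one_of_one_le_of_nonpos hB (by linarith)
      _ ≤ δ⁻¹ := (one_le_inv₀ hδ0).2 hδ1.le
  · have hx1 : (1:ℝ) < |x| := lt_of_not_ge h
    exact Real.rpow_le_rpow_of_nonpos (by linarith) hx (by linarith)

lemma gf_le_inv (hδ0 : 0 < δ) (hδ1 : δ < 1) (x : ℝ) : gf δ x ≤ δ⁻¹ := by
  unfold gf
  split_ifs with h
  · exact le_rfl
  · have hx1 : (1:ℝ) < |x| := lt_of_not_ge h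
    calc |x| ^ (δ - 1) ≤ 1 := Real.rpow_le_one_of_one_le_of_nonpos hx1.le (by linarith)
      _ ≤ δ⁻¹ := (one_le_inv₀ hδ0).2 hδ1.le

lemma lint_pow_Ioc_eq {q B : ℝ} (hq : -1 < q) (hB : 1 ≤ B) :
    ∫⁻ x in Ioc 1 B, ENNReal.ofReal (x ^ q) =
      ENNReal.ofReal ((B ^ (q + 1) - 1) / (q + 1)) := by
  have hcont : ContinuousOn (fun x : ℝ => x ^ q) (Icc 1 B) := by
    apply ContinuousOn.rpow_const continuousOn_id
    intro x hx
    exact Or.inl (by simp only [id_eq]; intro h0; rw [h0] at hx; exact absurd hx.1 (by norm_num))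
  have hint : IntegrableOn (fun x : ℝ => x ^ q) (Ioc 1 B) :=
    (hcont.integrableOn_Icc).mono_set Ioc_subset_Icc_self
  have hnn : 0 ≤ᵐ[volume.restrict (Ioc 1 B)] fun x : ℝ => x ^ q := by
    filter_upwards [ae_restrict_mem measurableSet_Ioc] with x hx
    have : (0:ℝ) < x := by linarith [hx.1]
    positivity
  rw [← ofReal_integral_eq_lintegral_ofReal hint hnn]
  congr 1
  rw [← intervalIntegral.integral_of_le hB, integral_rpow (Or.inl hq)]
  rw [Real.one_rpow]


lemma lint_pow_Icc_neg (hδ0 : 0 < δ) (hδ1 : δ < 1) {B : ℝ} (hB : 1 ≤ B) :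
    ∫⁻ x in Icc (-B) (-1), ENNReal.ofReal (|x| ^ (δ - 1)) ≤ ENNReal.ofReal (B ^ δ / δ) := by
  have hcont : ContinuousOn (fun x : ℝ => |x| ^ (δ - 1)) (Icc (-B) (-1)) := by
    apply ContinuousOn.rpow_const continuous_abs.continuousOn
    intro x hx
    refine Or.inl (by simp only [abs_ne_zero]; intro h0; rw [h0] at hx; exact absurd hx.2 (by norm_num))
  have hint : IntegrableOn (fun x : ℝ => |x| ^ (δ - 1)) (Icc (-B) (-1)) :=
    hcont.integrableOn_Icc
  have hnn : 0 ≤ᵐ[volume.restrict (Icc (-B) (-1))] fun x : ℝ => |x| ^ (δ - 1) := by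
    filter_upwards with x
    positivity
  rw [← ofReal_integral_eq_lintegral_ofReal hint hnn]
  apply ENNReal.ofReal_le_ofReal
  have hBneg : (-B : ℝ) ≤ -1 := by linarith
  rw [MeasureTheory.integral_Icc_eq_integral_Ioc, ← intervalIntegral.integral_of_le hBneg]
  have heq : EqOn (fun x : ℝ => |x| ^ (δ - 1)) (fun x : ℝ => (-x) ^ (δ - 1)) (Set.uIcc (-B) (-1)) := by
    intro x hx
    rw [Set.uIcc_of_le hBneg] at hx
    simp only
    rw [abs_of_nonpos (by linarith [hx.2] : x ≤ 0)]
  rw [intervalIntegral.integral_congr heq, intervalIntegral.integral_comp_neg (fun x : ℝ => x ^ (δ - 1))]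
  rw [neg_neg, neg_neg, integral_rpow (Or.inl (by linarith : (-1:ℝ) < δ - 1))]
  rw [Real.one_rpow, sub_add_cancel]
  exact (div_le_div_iff_of_pos_right hδ0).mpr (by linarith)


lemma lint_gf_le (hδ0 : 0 < δ) (hδ1 : δ < 1) {a b : ℝ} (hab : a < b) :
    ∫⁻ x in Icc a b, ENNReal.ofReal (gf δ x)
      ≤ ENNReal.ofReal (8 / δ * max 1 (max |a| |b|) ^ (δ - 1) * (b - a)) := by
  set M : ℝ := max |a| |b| with hMdef
  set G : ℝ := max 1 M with hGdef
  have hG1 : 1 ≤ G := le_max_left _ _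
  have hG0 : (0:ℝ) < G := by linarith
  have hba : (0:ℝ) < b - a := by linarith
  have hconst : ∀ K : ℝ, (∀ x ∈ Icc a b, gf δ x ≤ K) →
      ∫⁻ x in Icc a b, ENNReal.ofReal (gf δ x) ≤ ENNReal.ofReal (K * (b - a)) := by
    intro K h
    calc ∫⁻ x in Icc a b, ENNReal.ofReal (gf δ x)
        ≤ ∫⁻ _ in Icc a b, ENNReal.ofReal K :=
          setLIntegral_mono' measurableSet_Icc fun x hx => ENNReal.ofReal_le_ofReal (h x hx)
      _ = ENNReal.ofReal K * volume (Icc a b) := setLIntegral_const _ _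
      _ ≤ ENNReal.ofReal (K * (b - a)) := by
          rw [Real.volume_Icc, ← ENNReal.ofReal_mul']
          linarith
  rcases le_or_gt M 1 with hM | hM
  · -- small case : G = 1
    have hGeq : G = 1 := max_eq_left hM
    rw [hGeq, Real.one_rpow]
    apply hconst
    intro x hx
    calc gf δ x ≤ δ⁻¹ := gf_le_inv hδ0 hδ1 x
      _ ≤ 8 / δ * 1 := by
          rw [mul_one, inv_eq_one_div]
          gcongr
          · norm_num
  · have hGM : G = M := max_eq_right hM.le
    have hM0 : (0:ℝ) < M := by linarith
    rcases le_or_gt (b - a) (M / 2) with hshort | hlong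
    · -- short interval
      apply hconst
      intro x hx
      have hxb : |b| - |x| ≤ b - x :=
        (abs_sub_abs_le_abs_sub b x).trans_eq (abs_of_nonneg (by linarith [hx.2]))
      have hxa : |a| - |x| ≤ x - a := by
        have := abs_sub_abs_le_abs_sub a x
        rwa [abs_sub_comm, abs_of_nonneg (by linarith [hx.1] : (0:ℝ) ≤ x - a)] at this
      have hMx : M ≤ |x| + (b - a) := by
        apply max_le
        · linarith [hx.1, hx.2]
        · linarith [hx.1, hx.2]
      have hhalf : M / 2 ≤ |x| := by linarith
      have hMpow : M ^ (δ - 1 : ℝ) ≤ 8 / δ * M ^ (δ - 1) / 2 := by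
        have h2 : (2:ℝ) ≤ 8 / δ := by
          rw [le_div_iff₀ hδ0]; nlinarith
        have hp0 : (0:ℝ) ≤ M ^ (δ - 1 : ℝ) := Real.rpow_nonneg hM0.le _
        nlinarith
      rw [hGM]
      unfold gf
      split_ifs with h
      · -- |x| ≤ 1, so M ≤ 2
        have hM2 : M ≤ 2 := by linarith
        have hMinv : (2:ℝ)⁻¹ ≤ M ^ (δ - 1 : ℝ) := by
          calc (2:ℝ)⁻¹ ≤ M⁻¹ := by
                apply inv_anti₀ hM0 hM2
            _ = M ^ (-1 : ℝ) := (Real.rpow_neg_one M).symm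
            _ ≤ M ^ (δ - 1 : ℝ) :=
                Real.rpow_le_rpow_of_exponent_le (by linarith) (by linarith)
        have h8 : (1:ℝ) ≤ 8 * M ^ (δ - 1 : ℝ) := by nlinarith
        calc δ⁻¹ = 1 / δ := (one_div δ).symm
          _ ≤ 8 * M ^ (δ - 1 : ℝ) / δ := by gcongr
          _ = 8 / δ * M ^ (δ - 1 : ℝ) := by ring
      · -- |x| > 1
        have hx1 : (1:ℝ) < |x| := lt_of_not_ge h
        have hstep : |x| ^ (δ - 1 : ℝ) ≤ (M / 2) ^ (δ - 1 : ℝ) :=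
          Real.rpow_le_rpow_of_nonpos (by linarith) hhalf (by linarith)
        have h2pow : (2:ℝ)⁻¹ ≤ (2:ℝ) ^ (δ - 1 : ℝ) := by
          calc (2:ℝ)⁻¹ = (2:ℝ) ^ (-1 : ℝ) := (Real.rpow_neg_one 2).symm
            _ ≤ (2:ℝ) ^ (δ - 1 : ℝ) :=
                Real.rpow_le_rpow_of_exponent_le one_le_two (by linarith)
        have hMp : (0:ℝ) ≤ M ^ (δ - 1 : ℝ) := Real.rpow_nonneg hM0.le _
        have h2p : (0:ℝ) < (2:ℝ) ^ (δ - 1 : ℝ) := Real.rpow_pos_of_pos two_pos _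
        have hdiv : (M / 2) ^ (δ - 1 : ℝ) = M ^ (δ - 1 : ℝ) / (2:ℝ) ^ (δ - 1 : ℝ) :=
          Real.div_rpow hM0.le (by norm_num) _
        have h8 : (2:ℝ) ≤ 8 / δ := by rw [le_div_iff₀ hδ0]; nlinarith
        calc |x| ^ (δ - 1 : ℝ) ≤ M ^ (δ - 1 : ℝ) / (2:ℝ) ^ (δ - 1 : ℝ) := by
              rw [← hdiv]; exact hstep
          _ ≤ 2 * M ^ (δ - 1 : ℝ) := by
              rw [div_le_iff₀ h2p]; nlinarith
          _ ≤ 8 / δ * M ^ (δ - 1 : ℝ) := by nlinarith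
    · -- long interval
      have hsub : Icc a b ⊆ Icc (-M) M := fun x hx =>
        ⟨by linarith [neg_abs_le a, le_max_left |a| |b|, hx.1],
         by linarith [le_abs_self b, le_max_right |a| |b|, hx.2]⟩
      have hcover : Icc (-M : ℝ) M ⊆ Ico (-M) (-1) ∪ (Icc (-1) 1 ∪ Ioc 1 M) := by
        intro x hx
        rcases lt_or_ge x (-1) with h | h
        · exact Or.inl ⟨hx.1, h⟩
        rcases le_or_gt x 1 with h2 | h2
        · exact Or.inr (Or.inl ⟨h, h2⟩)
        · exact Or.inr (Or.inr ⟨h2, hx.2⟩)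
      have t1 : ∫⁻ x in Ico (-M) (-1), ENNReal.ofReal (gf δ x) ≤ ENNReal.ofReal (M ^ δ / δ) := by
        calc ∫⁻ x in Ico (-M) (-1), ENNReal.ofReal (gf δ x)
            = ∫⁻ x in Ico (-M) (-1), ENNReal.ofReal (|x| ^ (δ - 1)) := by
              apply setLIntegral_congr_fun measurableSet_Ico
              intro x hx
              have hx1 : (1:ℝ) < |x| := by
                rw [abs_of_nonpos (by linarith [hx.2] : x ≤ 0)]
                linarith [hx.2]
              unfold gf
              beta_reduce
              rw [if_neg (not_le.mpr hx1)]
          _ ≤ ∫⁻ x in Icc (-M) (-1), ENNReal.ofReal (|x| ^ (δ - 1)) :=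
              lintegral_mono_set Ico_subset_Icc_self
          _ ≤ _ := lint_pow_Icc_neg hδ0 hδ1 hM.le
      have t2 : ∫⁻ x in Icc (-1:ℝ) 1, ENNReal.ofReal (gf δ x) ≤ ENNReal.ofReal (δ⁻¹ * 2) := by
        calc ∫⁻ x in Icc (-1:ℝ) 1, ENNReal.ofReal (gf δ x)
            ≤ ∫⁻ _ in Icc (-1:ℝ) 1, ENNReal.ofReal δ⁻¹ :=
              setLIntegral_mono' measurableSet_Icc fun x _ =>
                ENNReal.ofReal_le_ofReal (gf_le_inv hδ0 hδ1 x)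
          _ = ENNReal.ofReal δ⁻¹ * volume (Icc (-1:ℝ) 1) := setLIntegral_const _ _
          _ = ENNReal.ofReal (δ⁻¹ * 2) := by
              rw [Real.volume_Icc, ← ENNReal.ofReal_mul (by positivity)]
              norm_num
      have t3 : ∫⁻ x in Ioc (1:ℝ) M, ENNReal.ofReal (gf δ x) ≤ ENNReal.ofReal (M ^ δ / δ) := by
        calc ∫⁻ x in Ioc (1:ℝ) M, ENNReal.ofReal (gf δ x)
            = ∫⁻ x in Ioc (1:ℝ) M, ENNReal.ofReal (x ^ (δ - 1)) := by
              apply setLIntegral_congr_fun measurableSet_Ioc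
              intro x hx
              have hx1 : (1:ℝ) < x := hx.1
              have : (1:ℝ) < |x| := by rw [abs_of_pos (by linarith)]; exact hx1
              unfold gf
              beta_reduce
              rw [if_neg (not_le.mpr this), abs_of_pos (by linarith)]
          _ = ENNReal.ofReal ((M ^ (δ - 1 + 1) - 1) / (δ - 1 + 1)) :=
              lint_pow_Ioc_eq (by linarith) hM.le
          _ ≤ ENNReal.ofReal (M ^ δ / δ) := by
              apply ENNReal.ofReal_le_ofReal
              rw [show δ - 1 + 1 = δ by ring]
              gcongr
              linarith [Real.rpow_nonneg hM0.le δ]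
      have hMd1 : (1:ℝ) ≤ M ^ (δ:ℝ) := Real.one_le_rpow hM.le hδ0.le
      have hMpow : M ^ (δ - 1 : ℝ) * M = M ^ (δ:ℝ) := by
        rw [← Real.rpow_add_one hM0.ne']
        norm_num
      have hMnn : (0:ℝ) ≤ M ^ (δ - 1 : ℝ) := Real.rpow_nonneg hM0.le _
      calc ∫⁻ x in Icc a b, ENNReal.ofReal (gf δ x)
          ≤ ∫⁻ x in Ico (-M) (-1) ∪ (Icc (-1:ℝ) 1 ∪ Ioc 1 M), ENNReal.ofReal (gf δ x) :=
            lintegral_mono_set (hsub.trans hcover)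
        _ ≤ (∫⁻ x in Ico (-M) (-1), ENNReal.ofReal (gf δ x)) +
              ∫⁻ x in Icc (-1:ℝ) 1 ∪ Ioc 1 M, ENNReal.ofReal (gf δ x) :=
            lintegral_union_le _ _ _
        _ ≤ (∫⁻ x in Ico (-M) (-1), ENNReal.ofReal (gf δ x)) +
              ((∫⁻ x in Icc (-1:ℝ) 1, ENNReal.ofReal (gf δ x)) +
                ∫⁻ x in Ioc (1:ℝ) M, ENNReal.ofReal (gf δ x)) :=
            add_le_add le_rfl (lintegral_union_le _ _ _)
        _ ≤ ENNReal.ofReal (M ^ δ / δ) + (ENNReal.ofReal (δ⁻¹ * 2) + ENNReal.ofReal (M ^ δ / δ)) :=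
            add_le_add t1 (add_le_add t2 t3)
        _ ≤ ENNReal.ofReal (8 / δ * G ^ (δ - 1) * (b - a)) := by
            rw [← ENNReal.ofReal_add (by positivity) (by positivity),
              ← ENNReal.ofReal_add (by positivity) (by positivity)]
            apply ENNReal.ofReal_le_ofReal
            rw [hGM]
            have key : 2 * M ^ (δ:ℝ) + 2 ≤ 8 * M ^ (δ - 1 : ℝ) * (b - a) := by
              nlinarith [mul_le_mul_of_nonneg_left hlong.le
                (by positivity : (0:ℝ) ≤ 8 * M ^ (δ - 1 : ℝ))]
            have heq : M ^ (δ:ℝ) / δ + (δ⁻¹ * 2 + M ^ (δ:ℝ) / δ) = (2 * M ^ (δ:ℝ) + 2) / δ := by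
              field_simp
              ring
            rw [heq, show 8 / δ * M ^ (δ - 1:ℝ) * (b - a) = 8 * M ^ (δ - 1:ℝ) * (b - a) / δ by ring]
            gcongr


lemma upper_interval (hp : 1 < p) (hδ0 : 0 < δ) (hδ1 : δ < 1) {a b : ℝ} (hab : a < b) :
    ((∫⁻ x in Icc a b, wdelta p δ x) / ENNReal.ofReal (b - a)) *
      ((∫⁻ x in Icc a b, wdelta p δ x ^ (1 - conjExp p)) / ENNReal.ofReal (b - a)) ^ (p - 1)
      ≤ ENNReal.ofReal ((8 / δ) ^ (p - 1)) := by
  have h1 : (0:ℝ) < p - 1 := by linarith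
  set G : ℝ := max 1 (max |a| |b|) with hGdef
  have hG1 : 1 ≤ G := le_max_left _ _
  have hG0 : (0:ℝ) < G := by linarith
  have hba : (0:ℝ) < b - a := by linarith
  have hvol : ENNReal.ofReal (b - a) ≠ 0 := by
    simp only [ne_eq, ENNReal.ofReal_eq_zero, not_le]
    exact hba
  have hmem : ∀ x ∈ Icc a b, |x| ≤ G := fun x hx =>
    le_trans (abs_le_max_abs_abs hx.1 hx.2) (le_max_right _ _)
  have hw : (∫⁻ x in Icc a b, wdelta p δ x) / ENNReal.ofReal (b - a)
      ≤ ENNReal.ofReal (G ^ ((1 - δ) * (p - 1))) := by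
    rw [ENNReal.div_le_iff hvol ENNReal.ofReal_ne_top]
    calc ∫⁻ x in Icc a b, wdelta p δ x
        ≤ ∫⁻ _ in Icc a b, ENNReal.ofReal (G ^ ((1 - δ) * (p - 1))) :=
          setLIntegral_mono' measurableSet_Icc fun x hx => w_le hp hδ0 hδ1 hG1 (hmem x hx)
      _ = ENNReal.ofReal (G ^ ((1 - δ) * (p - 1))) * ENNReal.ofReal (b - a) := by
          rw [setLIntegral_const, Real.volume_Icc]
  have hs : (∫⁻ x in Icc a b, wdelta p δ x ^ (1 - conjExp p)) / ENNReal.ofReal (b - a)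
      ≤ ENNReal.ofReal (8 / δ * G ^ (δ - 1)) := by
    rw [ENNReal.div_le_iff hvol ENNReal.ofReal_ne_top]
    calc ∫⁻ x in Icc a b, wdelta p δ x ^ (1 - conjExp p)
        = ∫⁻ x in Icc a b, ENNReal.ofReal (gf δ x) :=
          lintegral_congr fun x => sigma_eq hp hδ0 x
      _ ≤ ENNReal.ofReal (8 / δ * G ^ (δ - 1) * (b - a)) := lint_gf_le hδ0 hδ1 hab
      _ = ENNReal.ofReal (8 / δ * G ^ (δ - 1)) * ENNReal.ofReal (b - a) :=
          ENNReal.ofReal_mul (by positivity)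
  calc ((∫⁻ x in Icc a b, wdelta p δ x) / ENNReal.ofReal (b - a)) *
        ((∫⁻ x in Icc a b, wdelta p δ x ^ (1 - conjExp p)) / ENNReal.ofReal (b - a)) ^ (p - 1)
      ≤ ENNReal.ofReal (G ^ ((1 - δ) * (p - 1))) *
          ENNReal.ofReal (8 / δ * G ^ (δ - 1)) ^ (p - 1) :=
        mul_le_mul' hw (ENNReal.rpow_le_rpow hs h1.le)
    _ = ENNReal.ofReal (G ^ ((1 - δ) * (p - 1)) * (8 / δ * G ^ (δ - 1)) ^ (p - 1)) := by
        rw [ENNReal.ofReal_rpow_of_pos (by positivity),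
          ← ENNReal.ofReal_mul (by positivity)]
    _ = ENNReal.ofReal ((8 / δ) ^ (p - 1)) := by
        congr 1
        rw [Real.mul_rpow (by positivity) (by positivity), ← Real.rpow_mul hG0.le,
          mul_comm ((8 / δ) ^ (p - 1)) _, ← mul_assoc, ← Real.rpow_add hG0,
          show (1 - δ) * (p - 1) + (δ - 1) * (p - 1) = 0 by ring, Real.rpow_zero, one_mul]


lemma lower_bound (hp : 1 < p) (hδ0 : 0 < δ) (hδ1 : δ < 1) :
    ENNReal.ofReal ((2:ℝ) ^ (-(p-1)) / (2*p) * δ ^ (-(p - 1))) ≤ Ap1 p (wdelta p δ) := by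
  have h1 : (0:ℝ) < p - 1 := by linarith
  set q : ℝ := (1 - δ) * (p - 1) with hq
  have hq0 : 0 ≤ q := by nlinarith
  set R : ℝ := 2 ^ (1/δ : ℝ) with hR
  have hR2 : (2:ℝ) ≤ R := by
    calc (2:ℝ) = 2 ^ (1:ℝ) := (Real.rpow_one 2).symm
      _ ≤ 2 ^ (1/δ : ℝ) :=
        Real.rpow_le_rpow_of_exponent_le one_le_two (by rw [le_div_iff₀ hδ0]; linarith)
  have hR0 : (0:ℝ) < R := by linarith
  have hRδ : R ^ (δ:ℝ) = 2 := by
    rw [hR, ← Real.rpow_mul (by norm_num), one_div, inv_mul_cancel₀ hδ0.ne', Real.rpow_one]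
  have hsub : Ioc (1:ℝ) R ⊆ Icc 0 R := fun x hx => ⟨by linarith [hx.1], hx.2⟩
  have hIw : ENNReal.ofReal (R ^ (q+1) / (2*p)) ≤ ∫⁻ x in Icc 0 R, wdelta p δ x := by
    calc ENNReal.ofReal (R ^ (q+1) / (2*p))
        ≤ ENNReal.ofReal ((R ^ (q+1) - 1) / (q+1)) := by
          apply ENNReal.ofReal_le_ofReal
          have hRq : (2:ℝ) ≤ R ^ (q+1) := by
            calc (2:ℝ) = R ^ (0:ℝ) * 2 := by rw [Real.rpow_zero]; ring
              _ ≤ R ^ (q+1) := by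
                  calc R ^ (0:ℝ) * 2 ≤ R ^ (0:ℝ) * R := by
                        rw [Real.rpow_zero, one_mul, one_mul]; exact hR2
                    _ = R ^ (0 + 1 : ℝ) := by rw [Real.rpow_zero, one_mul, zero_add, Real.rpow_one]
                    _ ≤ R ^ (q+1) := Real.rpow_le_rpow_of_exponent_le (by linarith) (by linarith)
          have hqp : q + 1 ≤ p := by nlinarith
          rw [div_le_div_iff₀ (by positivity) (by positivity)]
          nlinarith [mul_nonneg (by linarith : (0:ℝ) ≤ R ^ (q+1)) (by linarith : (0:ℝ) ≤ p - (q+1)),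
            mul_nonneg (by linarith : (0:ℝ) ≤ R ^ (q+1) - 2) (by linarith : (0:ℝ) ≤ p)]
      _ = ∫⁻ x in Ioc 1 R, ENNReal.ofReal (x ^ q) :=
          (lint_pow_Ioc_eq (by linarith) (by linarith)).symm
      _ = ∫⁻ x in Ioc 1 R, wdelta p δ x := by
          apply setLIntegral_congr_fun measurableSet_Ioc
          intro x hx
          have hx1 : (1:ℝ) < x := hx.1
          have habs : ¬ |x| ≤ 1 := not_le.mpr (by rw [abs_of_pos (by linarith)]; exact hx1)
          unfold wdelta
          rw [if_neg habs, abs_of_pos (by linarith)]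
      _ ≤ ∫⁻ x in Icc 0 R, wdelta p δ x := lintegral_mono_set hsub
  have hIs : ENNReal.ofReal (1/δ) ≤ ∫⁻ x in Icc 0 R, wdelta p δ x ^ (1 - conjExp p) := by
    calc ENNReal.ofReal (1/δ)
        = ENNReal.ofReal ((R ^ ((δ - 1) + 1) - 1) / ((δ - 1) + 1)) := by
          rw [show (δ - 1) + 1 = δ by ring, hRδ]
          norm_num
      _ = ∫⁻ x in Ioc 1 R, ENNReal.ofReal (x ^ (δ - 1)) :=
          (lint_pow_Ioc_eq (by linarith) (by linarith)).symm
      _ = ∫⁻ x in Ioc 1 R, wdelta p δ x ^ (1 - conjExp p) := by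
          apply setLIntegral_congr_fun measurableSet_Ioc
          intro x hx
          have hx1 : (1:ℝ) < x := hx.1
          beta_reduce
          rw [sigma_eq hp hδ0 x]
          unfold gf
          rw [if_neg (not_le.mpr (by rw [abs_of_pos (by linarith)]; exact hx1)),
            abs_of_pos (by linarith)]
      _ ≤ _ := lintegral_mono_set hsub
  have hRR : R ^ (q+1) / R / R ^ (p-1) = (2:ℝ) ^ (-(p-1)) := by
    rw [Real.rpow_add_one hR0.ne', mul_div_cancel_right₀ _ hR0.ne',
      ← Real.rpow_sub hR0, show q - (p-1) = δ * (-(p-1)) by rw [hq]; ring,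
      Real.rpow_mul hR0.le, hRδ]
  have hpart : ((1/δ) / R : ℝ) ^ (p-1) = δ ^ (-(p-1)) / R ^ (p-1) := by
    rw [Real.div_rpow (by positivity) hR0.le, one_div, Real.inv_rpow hδ0.le,
      ← Real.rpow_neg hδ0.le]
  have hAeq : (2:ℝ) ^ (-(p-1)) / (2*p) * δ ^ (-(p - 1))
      = R ^ (q+1) / (2*p) / R * ((1/δ) / R) ^ (p-1) := by
    rw [hpart, ← hRR]
    have hRp : (0:ℝ) < R ^ (p-1 : ℝ) := Real.rpow_pos_of_pos hR0 _
    field_simp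
  have hterm : ENNReal.ofReal ((2:ℝ) ^ (-(p-1)) / (2*p) * δ ^ (-(p - 1)))
      ≤ ((∫⁻ x in Icc 0 R, wdelta p δ x) / ENNReal.ofReal (R - 0)) *
        ((∫⁻ x in Icc 0 R, wdelta p δ x ^ (1 - conjExp p)) / ENNReal.ofReal (R - 0)) ^ (p - 1) := by
    rw [hAeq, show R - 0 = R by ring]
    calc ENNReal.ofReal (R ^ (q+1) / (2*p) / R * ((1/δ) / R) ^ (p-1))
        = ENNReal.ofReal (R ^ (q+1) / (2*p) / R) * ENNReal.ofReal ((1/δ) / R) ^ (p-1) := by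
          rw [ENNReal.ofReal_mul (by positivity), ENNReal.ofReal_rpow_of_pos (by positivity)]
      _ ≤ _ := by
          apply mul_le_mul'
          · rw [ENNReal.ofReal_div_of_pos hR0]
            exact ENNReal.div_le_div_right hIw _
          · apply ENNReal.rpow_le_rpow _ h1.le
            rw [ENNReal.ofReal_div_of_pos hR0]
            exact ENNReal.div_le_div_right hIs _
  refine le_trans hterm ?_
  rw [Ap1]
  exact le_iSup_of_le 0 (le_iSup_of_le R (le_iSup_of_le hR0 le_rfl))

end WdAux

/-- `[w_δ]_{A_p} ≈ δ^{-(p-1)}` for the weight `w_δ`. -/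
theorem wdelta_Ap_asymptotics (p : ℝ) (hp : 1 < p) :
    ∃ c C : ℝ, 0 < c ∧ 0 < C ∧ ∀ δ : ℝ, 0 < δ → δ < 1 →
      ENNReal.ofReal (c * δ ^ (-(p - 1))) ≤ Ap1 p (wdelta p δ) ∧
        Ap1 p (wdelta p δ) ≤ ENNReal.ofReal (C * δ ^ (-(p - 1))) := by
  refine ⟨(2:ℝ) ^ (-(p-1)) / (2*p), (8:ℝ) ^ (p-1),
    div_pos (Real.rpow_pos_of_pos two_pos _) (by linarith),
    Real.rpow_pos_of_pos (by norm_num) _, fun δ hδ0 hδ1 => ⟨WdAux.lower_bound hp hδ0 hδ1, ?_⟩⟩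
  rw [Ap1]
  refine iSup_le fun a => iSup_le fun b => iSup_le fun hab => ?_
  calc ((∫⁻ x in Icc a b, wdelta p δ x) / ENNReal.ofReal (b - a)) *
        ((∫⁻ x in Icc a b, wdelta p δ x ^ (1 - conjExp p)) / ENNReal.ofReal (b - a)) ^ (p - 1)
      ≤ ENNReal.ofReal ((8 / δ) ^ (p - 1)) := WdAux.upper_interval hp hδ0 hδ1 hab
    _ = ENNReal.ofReal ((8:ℝ) ^ (p-1) * δ ^ (-(p - 1))) := by
        rw [Real.div_rpow (by norm_num) hδ0.le, Real.rpow_neg hδ0.le, div_eq_mul_inv]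
end
end

section
/- Let 1<p<∞ and 0<q≤p, and for 0<δ<1 define the weight on ℝ by w_δ(x) = δ^{p-1} for |x| ≤ 1 and w_δ(x) = |x|^{(1-δ)(p-1)} for |x| > 1. Then there is a constant c_{p,q}>0 depending only on p and q such that for all δ ∈ (0,1), ‖M‖_{L^{p,q}(w_δ)→L^{p,q}(w_δ)} ≥ c_{p,q} δ^{-1/q - (p-1)/p}. In particular (since [w_δ]_{A_p}^{1/p} ≈ δ^{-(p-1)/p} and [σ_δ]_{A_∞}^{1/q} ≲ δ^{-1/q} for σ_δ = w_δ^{1-p'}), the exponents 1/p on [w]_{A_p} and 1/q on [σ]_{A_∞} in the mixed bound ‖M‖_{L^{p,q}(w)} ≲ [w]_{A_p}^{1/p}[σ]_{A_∞}^{1/q} cannot be replaced by smaller ones. -/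
open MeasureTheory ENNReal NNReal Set

noncomputable section

/-- The weighted distribution function `w({|f| > s})`. -/
def wDist {α : Type*} [MeasurableSpace α] (μ : Measure α) (w : α → ℝ≥0∞)
    (f : α → ℝ≥0∞) (s : ℝ) : ℝ≥0∞ :=
  ∫⁻ x in {x | ENNReal.ofReal s < f x}, w x ∂μ

/-- The weighted Lorentz quasinorm `‖f‖_{L^{p,q}(w)}`; for `q = ∞` it is the weak norm. -/
def lorentzNorm {α : Type*} [MeasurableSpace α] (μ : Measure α) (w : α → ℝ≥0∞)
    (p : ℝ) (q : ℝ≥0∞) (f : α → ℝ≥0∞) : ℝ≥0∞ :=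
  if q = ∞ then ⨆ (s : ℝ) (_ : 0 < s), ENNReal.ofReal s * wDist μ w f s ^ (1 / p)
  else (ENNReal.ofReal p * ∫⁻ s in Set.Ioi (0 : ℝ),
      ENNReal.ofReal s ^ q.toReal * wDist μ w f s ^ (q.toReal / p) / ENNReal.ofReal s) ^ (1 / q.toReal)

/-- `min(p,q)` for a real `p` and an extended-real `q`. -/
def minE (p : ℝ) (q : ℝ≥0∞) : ℝ := if q = ∞ then p else min p q.toReal
open intervalIntegral in
lemma lintegral_ofReal_rpow_Ioo {a b r : ℝ} (ha : 0 ≤ a) (hab : a ≤ b) (hr : -1 < r) :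
    ∫⁻ s in Set.Ioo a b, ENNReal.ofReal (s ^ r)
      = ENNReal.ofReal ((b ^ (r + 1) - a ^ (r + 1)) / (r + 1)) := by
  rw [← ofReal_integral_eq_lintegral_ofReal]
  · congr 1
    rw [← MeasureTheory.integral_Ioc_eq_integral_Ioo, ← integral_of_le hab,
      integral_rpow (Or.inl hr)]
  · exact ((intervalIntegrable_rpow' hr (a := a) (b := b)).1.mono_set Set.Ioo_subset_Ioc_self)
  · exact (ae_restrict_mem measurableSet_Ioo).mono fun x hx =>
      Real.rpow_nonneg (ha.trans hx.1.le) r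

section main
variable {p q δ : ℝ}

/-- the test function -/
def testf : ℝ → ℝ≥0∞ := (Set.Ioc (0:ℝ) 1).indicator (fun _ => 1)

lemma testf_meas : Measurable testf := measurable_const.indicator measurableSet_Ioc

lemma wdist_testf_lt_one (hδ : 0 < δ) {s : ℝ} (hs0 : 0 < s) (hs1 : s < 1) :
    wDist volume (wdelta p δ) testf s = ENNReal.ofReal (δ ^ (p - 1)) := by
  have hset : {x : ℝ | ENNReal.ofReal s < testf x} = Set.Ioc 0 1 := by
    ext x
    by_cases hx : x ∈ Set.Ioc (0:ℝ) 1
    · simp [testf, Set.indicator_of_mem hx, hx, ENNReal.ofReal_lt_one, hs1]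
    · simp [testf, Set.indicator_of_notMem hx, hx]
  rw [wDist, hset]
  rw [setLIntegral_congr_fun measurableSet_Ioc
      (fun x hx => ?_), setLIntegral_const,
    Real.volume_Ioc, sub_zero, ENNReal.ofReal_one, mul_one]
  have : |x| ≤ 1 := abs_le.mpr ⟨by linarith [hx.1], hx.2⟩
  simp [wdelta, this]

lemma wdist_testf_one_le {s : ℝ} (hs1 : 1 ≤ s) :
    wDist volume (wdelta p δ) testf s = 0 := by
  have hset : {x : ℝ | ENNReal.ofReal s < testf x} = ∅ := by
    ext x
    by_cases hx : x ∈ Set.Ioc (0:ℝ) 1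
    · simp only [Set.mem_setOf_eq, Set.mem_empty_iff_false, iff_false, not_lt, testf,
        Set.indicator_of_mem hx]
      exact ENNReal.one_le_ofReal.mpr hs1
    · simp [testf, Set.indicator_of_notMem hx, hx]
  rw [wDist, hset, Measure.restrict_empty, lintegral_zero_measure]

lemma lorentz_testf (hp : 1 < p) (hq0 : 0 < q) (hδ : 0 < δ) :
    lorentzNorm volume (wdelta p δ) p (ENNReal.ofReal q) testf
      = ENNReal.ofReal ((p * (δ ^ (p - 1)) ^ (q / p) / q) ^ (1 / q)) := by
  have hp0 : 0 < p := by linarith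
  have hqp : 0 < q / p := by positivity
  have hW : (0:ℝ) < δ ^ (p - 1) := Real.rpow_pos_of_pos hδ _
  rw [lorentzNorm, if_neg ENNReal.ofReal_ne_top, ENNReal.toReal_ofReal hq0.le]
  have hsplit : Set.Ioi (0:ℝ) = Set.Ioo 0 1 ∪ Set.Ici 1 := (Set.Ioo_union_Ici_eq_Ioi one_pos).symm
  have hdisj : Disjoint (Set.Ioo (0:ℝ) 1) (Set.Ici 1) :=
    Set.disjoint_left.mpr fun x hx h1 => absurd hx.2 (not_lt.mpr h1)
  rw [hsplit, lintegral_union measurableSet_Ici hdisj]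
  have h2 : ∫⁻ s in Set.Ici (1:ℝ),
      ENNReal.ofReal s ^ q * wDist volume (wdelta p δ) testf s ^ (q / p) / ENNReal.ofReal s = 0 := by
    rw [setLIntegral_congr_fun measurableSet_Ici
      (fun s hs => ?_), lintegral_zero]
    rw [wdist_testf_one_le hs, ENNReal.zero_rpow_of_pos hqp, mul_zero, ENNReal.zero_div]
  have h1 : ∫⁻ s in Set.Ioo (0:ℝ) 1,
      ENNReal.ofReal s ^ q * wDist volume (wdelta p δ) testf s ^ (q / p) / ENNReal.ofReal s
      = ENNReal.ofReal ((δ ^ (p - 1)) ^ (q / p)) * ENNReal.ofReal (1 / q) := by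
    rw [setLIntegral_congr_fun measurableSet_Ioo
      (fun s hs => ?_)]
    · rw [lintegral_const_mul _ ((measurable_id'.pow_const (q - 1)).ennreal_ofReal),
        lintegral_ofReal_rpow_Ioo le_rfl zero_le_one (by linarith)]
      congr 2
      rw [show q - 1 + 1 = q by ring, Real.one_rpow, Real.zero_rpow hq0.ne']
      norm_num
    · show _ = ENNReal.ofReal ((δ ^ (p-1)) ^ (q/p)) * ENNReal.ofReal (s ^ (q - 1))
      rw [wdist_testf_lt_one hδ hs.1 hs.2,
        ENNReal.ofReal_rpow_of_pos hs.1, ENNReal.ofReal_rpow_of_pos hW,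
        ← ENNReal.ofReal_mul (Real.rpow_nonneg hs.1.le q), ← ENNReal.ofReal_div_of_pos hs.1,
        ← ENNReal.ofReal_mul (Real.rpow_nonneg (Real.rpow_pos_of_pos hδ _).le _)]
      congr 1
      rw [Real.rpow_sub hs.1, Real.rpow_one]
      ring
  rw [h1, h2, add_zero, ← ENNReal.ofReal_mul (by positivity),
    ← ENNReal.ofReal_mul (by positivity), ← ENNReal.ofReal_rpow_of_pos (by positivity)]
  congr 2
  ring

lemma maximal_testf_lower {x : ℝ} (hx : 1 < x) : 1 / ENNReal.ofReal x ≤ maximal1 testf x := by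
  have hx0 : (0:ℝ) < x := lt_trans one_pos hx
  have hint : ∫⁻ y in Set.Icc 0 x, testf y = 1 := by
    rw [testf, lintegral_indicator measurableSet_Ioc,
      Measure.restrict_restrict measurableSet_Ioc,
      Set.inter_eq_left.mpr (fun y hy => Set.mem_Icc.mpr ⟨hy.1.le, hy.2.trans hx.le⟩), setLIntegral_one,
      Real.volume_Ioc, sub_zero, ENNReal.ofReal_one]
  have heq : 1 / ENNReal.ofReal x
      = (∫⁻ y in Set.Icc 0 x, testf y) / ENNReal.ofReal (x - 0) := by
    rw [hint, sub_zero]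
  rw [heq, maximal1]
  exact le_iSup_of_le 0 (le_iSup_of_le x (le_iSup_of_le hx0 (le_iSup_of_le ⟨hx0.le, le_rfl⟩ le_rfl)))

lemma wdist_max_lower (hp : 1 < p) (hδ0 : 0 < δ) (hδ1 : δ < 1) {β : ℝ}
    (hβ : β = (1 - δ) * (p - 1) + 1) {s : ℝ} (hs0 : 0 < s) (hs : s < 1/2) :
    ENNReal.ofReal (s ^ (-β) / (2 * p)) ≤ wDist volume (wdelta p δ) (maximal1 testf) s := by
  have hγ0 : (0:ℝ) ≤ (1 - δ) * (p - 1) := by nlinarith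
  have hβ1 : (1:ℝ) ≤ β := by rw [hβ]; linarith
  have hβ0 : (0:ℝ) < β := by linarith
  have hβp : β ≤ p := by rw [hβ]; nlinarith
  have h2s : (2:ℝ) < s⁻¹ := by
    rw [lt_inv_comm₀ two_pos hs0]
    linarith [hs]
  have hsub : Set.Ioo 1 s⁻¹ ⊆ {x : ℝ | ENNReal.ofReal s < maximal1 testf x} := by
    intro x hx
    have hx0 : (0:ℝ) < x := lt_trans one_pos hx.1
    have h1 : ENNReal.ofReal s < 1 / ENNReal.ofReal x := by
      rw [one_div, ← ENNReal.ofReal_inv_of_pos hx0]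
      exact (ENNReal.ofReal_lt_ofReal_iff (by positivity)).mpr ((lt_inv_comm₀ hx0 hs0).mp hx.2)
    exact lt_of_lt_of_le h1 (maximal_testf_lower hx.1)
  have hIoo : ∫⁻ x in Set.Ioo 1 s⁻¹, wdelta p δ x = ENNReal.ofReal ((s⁻¹ ^ β - 1) / β) := by
    rw [setLIntegral_congr_fun measurableSet_Ioo
        (fun x hx => ?_),
      lintegral_ofReal_rpow_Ioo zero_le_one (by linarith) (by linarith : (-1:ℝ) < (1-δ)*(p-1))]
    · rw [Real.one_rpow, hβ]
    · have hx1 : (1:ℝ) < x := hx.1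
      have : ¬ |x| ≤ 1 := by rw [abs_of_pos (lt_trans one_pos hx1)]; linarith
      rw [wdelta, if_neg this, abs_of_pos (lt_trans one_pos hx1)]
  have hinv : s⁻¹ ^ β = s ^ (-β) := by
    rw [Real.inv_rpow hs0.le, ← Real.rpow_neg hs0.le]
  have h2b : (2:ℝ) ≤ s ^ (-β) := by
    calc (2:ℝ) = 2 ^ (1:ℝ) := (Real.rpow_one 2).symm
    _ ≤ 2 ^ β := Real.rpow_le_rpow_of_exponent_le one_le_two hβ1
    _ ≤ s⁻¹ ^ β := Real.rpow_le_rpow (by norm_num) h2s.le hβ0.le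
    _ = s ^ (-β) := hinv
  have hreal : s ^ (-β) / (2 * p) ≤ (s⁻¹ ^ β - 1) / β := by
    rw [hinv, ← div_div]
    exact div_le_div₀ (by linarith) (by linarith) hβ0 hβp
  calc ENNReal.ofReal (s ^ (-β) / (2 * p)) ≤ ENNReal.ofReal ((s⁻¹ ^ β - 1) / β) :=
        ENNReal.ofReal_le_ofReal hreal
  _ = ∫⁻ x in Set.Ioo 1 s⁻¹, wdelta p δ x := hIoo.symm
  _ ≤ wDist volume (wdelta p δ) (maximal1 testf) s :=
        lintegral_mono' (Measure.restrict_mono hsub le_rfl) le_rfl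

lemma lorentz_max_lower (hp : 1 < p) (hq0 : 0 < q) (hqp : q ≤ p) (hδ0 : 0 < δ) (hδ1 : δ < 1) :
    ENNReal.ofReal ((p * ((2*p) ^ (-(q/p)) * (2 ^ (-(q*(p-1)/p*δ) - 1) / (q*(p-1)/p*δ)))) ^ (1/q))
      ≤ lorentzNorm volume (wdelta p δ) p (ENNReal.ofReal q) (maximal1 testf) := by
  have hp0 : (0:ℝ) < p := by linarith
  set ε : ℝ := q*(p-1)/p*δ with hεdef
  have hε : 0 < ε := by
    rw [hεdef]
    exact mul_pos (div_pos (mul_pos hq0 (by linarith)) hp0) hδ0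
  set a₀ : ℝ := 2 ^ (-1 - 1/ε) with ha₀def
  have ha₀ : 0 < a₀ := Real.rpow_pos_of_pos two_pos _
  have ha₀half : a₀ ≤ 1/2 := by
    have h1 : a₀ ≤ 2 ^ (-1:ℝ) := by
      apply Real.rpow_le_rpow_of_exponent_le one_le_two
      have h2 : 0 < 1/ε := by positivity
      linarith
    rw [Real.rpow_neg_one] at h1
    rw [one_div]
    exact h1
  set β : ℝ := (1 - δ) * (p - 1) + 1 with hβdef
  have hβ0 : (0:ℝ) < β := by rw [hβdef]; nlinarith
  have h2p : (0:ℝ) ≤ 2*p := by linarith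
  -- pointwise bound on Ioo a₀ (1/2)
  have hpt : ∀ s ∈ Set.Ioo a₀ (1/2:ℝ),
      ENNReal.ofReal ((2*p) ^ (-(q/p))) * ENNReal.ofReal (s ^ (ε-1)) ≤
        ENNReal.ofReal s ^ q *
          wDist volume (wdelta p δ) (maximal1 testf) s ^ (q/p) / ENNReal.ofReal s := by
    intro s hs
    have hs0 : 0 < s := lt_trans ha₀ hs.1
    have hs2 : s < 1/2 := hs.2
    have hBpos : (0:ℝ) < s ^ (-β) / (2*p) := div_pos (Real.rpow_pos_of_pos hs0 _) (by linarith)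
    have step1 : ENNReal.ofReal s ^ q * ENNReal.ofReal (s ^ (-β) / (2*p)) ^ (q/p) / ENNReal.ofReal s
        ≤ ENNReal.ofReal s ^ q *
          wDist volume (wdelta p δ) (maximal1 testf) s ^ (q/p) / ENNReal.ofReal s := by
      refine ENNReal.div_le_div_right (mul_le_mul_right ?_ _) _
      exact ENNReal.rpow_le_rpow (wdist_max_lower hp hδ0 hδ1 hβdef hs0 hs2)
        (div_nonneg hq0.le hp0.le)
    refine le_trans (le_of_eq ?_) step1
    rw [ENNReal.ofReal_rpow_of_pos hs0, ENNReal.ofReal_rpow_of_pos hBpos,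
      ← ENNReal.ofReal_mul (Real.rpow_nonneg hs0.le q),
      ← ENNReal.ofReal_div_of_pos hs0,
      ← ENNReal.ofReal_mul (Real.rpow_nonneg h2p _)]
    congr 1
    rw [Real.div_rpow (Real.rpow_nonneg hs0.le _) h2p,
      ← Real.rpow_mul hs0.le]
    rw [div_eq_mul_inv (s ^ (-β * (q/p))) ((2*p) ^ (q/p)), ← Real.rpow_neg h2p]
    have hexp : ε - 1 = (q + -β * (q/p)) - 1 := by
      rw [hβdef, hεdef]; field_simp; ring
    rw [hexp, Real.rpow_sub_one hs0.ne', Real.rpow_add hs0]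
    ring
  have hIlow : ENNReal.ofReal ((2*p) ^ (-(q/p))) * ENNReal.ofReal (2 ^ (-ε - 1) / ε)
      ≤ ∫⁻ s in Set.Ioi (0:ℝ), ENNReal.ofReal s ^ q *
          wDist volume (wdelta p δ) (maximal1 testf) s ^ (q/p) / ENNReal.ofReal s := by
    have hsub : Set.Ioo a₀ (1/2:ℝ) ⊆ Set.Ioi 0 := fun x hx => lt_trans ha₀ hx.1
    calc ENNReal.ofReal ((2*p) ^ (-(q/p))) * ENNReal.ofReal (2 ^ (-ε - 1) / ε)
        = ∫⁻ s in Set.Ioo a₀ (1/2:ℝ),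
            ENNReal.ofReal ((2*p) ^ (-(q/p))) * ENNReal.ofReal (s ^ (ε-1)) := by
          rw [lintegral_const_mul _ ((measurable_id'.pow_const (ε-1)).ennreal_ofReal),
            lintegral_ofReal_rpow_Ioo ha₀.le ha₀half (by linarith)]
          congr 2
          rw [show ε - 1 + 1 = ε by ring]
          congr 1
          rw [show (1/2 : ℝ) = 2 ^ (-1:ℝ) by rw [Real.rpow_neg_one]; norm_num,
            ha₀def, ← Real.rpow_mul (by norm_num : (0:ℝ) ≤ 2),
            ← Real.rpow_mul (by norm_num : (0:ℝ) ≤ 2),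
            show (-ε - 1 : ℝ) = (-1 - 1/ε) * ε by field_simp,
            show (-1 : ℝ) * ε = (-1 - 1/ε) * ε + 1 by field_simp; ring,
            Real.rpow_add two_pos, Real.rpow_one]
          ring
      _ ≤ ∫⁻ s in Set.Ioo a₀ (1/2:ℝ), ENNReal.ofReal s ^ q *
            wDist volume (wdelta p δ) (maximal1 testf) s ^ (q/p) / ENNReal.ofReal s :=
          lintegral_mono_ae ((ae_restrict_mem measurableSet_Ioo).mono hpt)
      _ ≤ _ := lintegral_mono' (Measure.restrict_mono hsub le_rfl) le_rfl
  rw [lorentzNorm, if_neg ENNReal.ofReal_ne_top, ENNReal.toReal_ofReal hq0.le]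
  calc ENNReal.ofReal ((p * ((2*p) ^ (-(q/p)) * (2 ^ (-ε - 1) / ε))) ^ (1/q))
      = (ENNReal.ofReal p * (ENNReal.ofReal ((2*p) ^ (-(q/p))) *
          ENNReal.ofReal (2 ^ (-ε - 1) / ε))) ^ (1/q) := by
        rw [← ENNReal.ofReal_mul (Real.rpow_nonneg h2p _), ← ENNReal.ofReal_mul hp0.le,
          ENNReal.ofReal_rpow_of_pos
            (mul_pos hp0 (mul_pos (Real.rpow_pos_of_pos (by linarith) _)
              (div_pos (Real.rpow_pos_of_pos two_pos _) hε)))]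
    _ ≤ _ := ENNReal.rpow_le_rpow (mul_le_mul_right hIlow _) (one_div_nonneg.mpr hq0.le)


/-- Sharpness in the case `q ≤ p`: the operator norm of `M` on `L^{p,q}(w_δ)` is at least
`c_{p,q} δ^{-1/q-(p-1)/p}`. -/
theorem wdelta_operator_norm_lower (p q : ℝ) (hp : 1 < p) (hq0 : 0 < q) (hqp : q ≤ p) :
    ∃ c : ℝ, 0 < c ∧ ∀ δ : ℝ, 0 < δ → δ < 1 →
      ∀ C : ℝ≥0∞,
        (∀ f : ℝ → ℝ≥0∞, Measurable f →
          lorentzNorm volume (wdelta p δ) p (ENNReal.ofReal q) (maximal1 f) ≤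
            C * lorentzNorm volume (wdelta p δ) p (ENNReal.ofReal q) f) →
        ENNReal.ofReal (c * δ ^ (-(1 / q) - (p - 1) / p)) ≤ C := by

  have hp0 : (0:ℝ) < p := by linarith
  have hp1 : (0:ℝ) < p - 1 := by linarith
  have h2p : (0:ℝ) < 2 * p := by linarith
  have hqp1 : (0:ℝ) < q * (p - 1) := mul_pos hq0 hp1
  set K : ℝ := p * ((2*p) ^ (-(q/p)) * (2 ^ (-q - 1) * (p/(q*(p-1))))) with hKdef
  have hK : 0 < K := by
    refine mul_pos hp0 (mul_pos (Real.rpow_pos_of_pos h2p _)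
      (mul_pos (Real.rpow_pos_of_pos two_pos _) (div_pos hp0 hqp1)))
  refine ⟨K ^ (1/q) * (q/p) ^ (1/q),
    mul_pos (Real.rpow_pos_of_pos hK _) (Real.rpow_pos_of_pos (div_pos hq0 hp0) _),
    fun δ hδ0 hδ1 C hC => ?_⟩
  set ε : ℝ := q*(p-1)/p*δ with hεdef
  have hε : 0 < ε := by
    rw [hεdef]; exact mul_pos (div_pos hqp1 hp0) hδ0
  -- comparison of the constants
  have h2e : (2:ℝ) ^ (-q - 1) ≤ 2 ^ (-ε - 1) := by
    apply Real.rpow_le_rpow_of_exponent_le one_le_two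
    have : ε ≤ q := by
      rw [hεdef]
      rw [div_mul_eq_mul_div, div_le_iff₀ hp0]
      nlinarith
    linarith
  have hεinv : ε⁻¹ = p/(q*(p-1)) * δ⁻¹ := by
    rw [hεdef]
    field_simp
  have h1 : K * δ⁻¹ ≤ p * ((2*p) ^ (-(q/p)) * (2 ^ (-ε - 1) / ε)) := by
    have hfac : (0:ℝ) ≤ p * (2*p) ^ (-(q/p)) * (p/(q*(p-1))) * δ⁻¹ :=
      mul_nonneg (mul_nonneg (mul_nonneg hp0.le (Real.rpow_nonneg h2p.le _))
        (div_nonneg hp0.le hqp1.le)) (inv_nonneg.mpr hδ0.le)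
    calc K * δ⁻¹ = (p * (2*p) ^ (-(q/p)) * (p/(q*(p-1))) * δ⁻¹) * 2 ^ (-q-1) := by
          rw [hKdef]; ring
    _ ≤ (p * (2*p) ^ (-(q/p)) * (p/(q*(p-1))) * δ⁻¹) * 2 ^ (-ε-1) :=
          mul_le_mul_of_nonneg_left h2e hfac
    _ = p * ((2*p) ^ (-(q/p)) * (2 ^ (-ε - 1) / ε)) := by
          rw [div_eq_mul_inv ((2:ℝ) ^ (-ε-1)) ε, hεinv]; ring
  -- the norm of the test function
  have hNf := lorentz_testf (q := q) hp hq0 hδ0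
  set Nf : ℝ := (p * (δ ^ (p - 1)) ^ (q / p) / q) ^ (1 / q) with hNfdef
  have hNfpos : 0 < Nf :=
    Real.rpow_pos_of_pos (div_pos (mul_pos hp0
      (Real.rpow_pos_of_pos (Real.rpow_pos_of_pos hδ0 _) _)) hq0) _
  have hNfval : Nf = (p/q) ^ (1/q) * δ ^ ((p-1)/p) := by
    rw [hNfdef, ← Real.rpow_mul hδ0.le,
      show p * δ ^ ((p-1) * (q/p)) / q = (p/q) * δ ^ ((p-1) * (q/p)) by ring,
      Real.mul_rpow (div_nonneg hp0.le hq0.le) (Real.rpow_nonneg hδ0.le _),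
      ← Real.rpow_mul hδ0.le,
      show (p-1) * (q/p) * (1/q) = (p-1)/p from by field_simp]
  -- key real computation
  have hreal : K ^ (1/q) * (q/p) ^ (1/q) * δ ^ (-(1 / q) - (p - 1) / p) * Nf
      ≤ (p * ((2*p) ^ (-(q/p)) * (2 ^ (-ε - 1) / ε))) ^ (1/q) := by
    have e1 : (q/p) ^ ((1:ℝ)/q) * (p/q) ^ ((1:ℝ)/q) = 1 := by
      rw [← Real.mul_rpow (div_nonneg hq0.le hp0.le) (div_nonneg hp0.le hq0.le),
        show q/p * (p/q) = 1 by field_simp, Real.one_rpow]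
    have e2 : δ ^ (-(1 / q) - (p - 1) / p) * δ ^ ((p-1)/p) = δ ^ (-(1/q)) := by
      rw [← Real.rpow_add hδ0]
      ring_nf
    have e3 : K ^ ((1:ℝ)/q) * δ ^ (-(1/q)) = (K * δ⁻¹) ^ ((1:ℝ)/q) := by
      rw [Real.mul_rpow hK.le (inv_nonneg.mpr hδ0.le), ← Real.rpow_neg_one δ,
        ← Real.rpow_mul hδ0.le]
      norm_num
    calc K ^ (1/q) * (q/p) ^ (1/q) * δ ^ (-(1 / q) - (p - 1) / p) * Nf
        = K ^ (1/q) * ((q/p) ^ (1/q) * (p/q) ^ (1/q)) *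
            (δ ^ (-(1 / q) - (p - 1) / p) * δ ^ ((p-1)/p)) := by rw [hNfval]; ring
      _ = (K * δ⁻¹) ^ ((1:ℝ)/q) := by rw [e1, e2, mul_one, e3]
      _ ≤ (p * ((2*p) ^ (-(q/p)) * (2 ^ (-ε - 1) / ε))) ^ (1/q) :=
          Real.rpow_le_rpow (mul_nonneg hK.le (inv_nonneg.mpr hδ0.le)) h1
            (one_div_nonneg.mpr hq0.le)
  -- put everything together in ℝ≥0∞
  have hmax := lorentz_max_lower (q := q) hp hq0 hqp hδ0 hδ1
  have hCf := hC testf testf_meas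
  have hchain : ENNReal.ofReal (K ^ (1/q) * (q/p) ^ (1/q) * δ ^ (-(1 / q) - (p - 1) / p)) *
      ENNReal.ofReal Nf ≤ C * ENNReal.ofReal Nf := by
    calc ENNReal.ofReal (K ^ (1/q) * (q/p) ^ (1/q) * δ ^ (-(1 / q) - (p - 1) / p)) *
        ENNReal.ofReal Nf
        = ENNReal.ofReal (K ^ (1/q) * (q/p) ^ (1/q) * δ ^ (-(1 / q) - (p - 1) / p) * Nf) :=
          (ENNReal.ofReal_mul (by positivity)).symm
      _ ≤ ENNReal.ofReal ((p * ((2*p) ^ (-(q/p)) * (2 ^ (-ε - 1) / ε))) ^ (1/q)) :=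
          ENNReal.ofReal_le_ofReal hreal
      _ ≤ lorentzNorm volume (wdelta p δ) p (ENNReal.ofReal q) (maximal1 testf) := hmax
      _ ≤ C * lorentzNorm volume (wdelta p δ) p (ENNReal.ofReal q) testf := hCf
      _ = C * ENNReal.ofReal Nf := by rw [hNf]
  exact (ENNReal.mul_le_mul_iff_left (ne_of_gt (ENNReal.ofReal_pos.mpr hNfpos))
    ENNReal.ofReal_ne_top).mp hchain
end main
end
end
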